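/- Let $\Gamma$ be a countable group with a fixed enumeration $\Gamma = (\gamma_s)_{s=1}^\infty$, let $(X,\mu)$ be a standard probability space, and let $a, b$ be measure-preserving actions of $\Gamma$ on $(X,\mu)$. Define $d_f(a,b) = \sum_{t=1}^\infty 2^{-t} \sup_k d_H(C_{t,k}(a), C_{t,k}(b))$. Then $d_f(a,b) = 0$ if and only if $a$ and $b$ are weakly equivalent. -/

import Mathlib

set_option maxHeartbeats 1000000
set_option linter.unusedSectionVars false

open MeasureTheory Metric

noncomputable section

/-- A measure-preserving action of a group `Γ` on a measure space `(X, μ)`. -/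
structure MPAction (Γ : Type*) [Group Γ] (X : Type*) [MeasurableSpace X]
    (μ : Measure X) where
  toFun : Γ → X → X
  measurePreserving : ∀ γ : Γ, MeasurePreserving (toFun γ) μ μ
  map_one : ∀ x : X, toFun 1 x = x
  map_mul : ∀ (γ δ : Γ) (x : X), toFun (γ * δ) x = toFun γ (toFun δ x)

/-- A finite measurable partition: the pieces are measurable, pairwise disjoint, and
cover the whole space. -/
def IsPartition {Y : Type*} [MeasurableSpace Y] {n : ℕ} (A : Fin n → Set Y) : Prop :=
  (∀ i, MeasurableSet (A i)) ∧ (∀ i j : Fin n, i ≠ j → Disjoint (A i) (A j)) ∧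
    (⋃ i, A i) = Set.univ

/-- `a` is weakly contained in `b`. -/
def WeaklyContained {Γ : Type*} [Group Γ] {Y : Type*} [MeasurableSpace Y]
    (ν : Measure Y) (a b : MPAction Γ Y ν) : Prop :=
  ∀ (n : ℕ) (A : Fin n → Set Y), IsPartition A → ∀ (F : Finset Γ) (ε : ℝ), 0 < ε →
    ∃ B : Fin n → Set Y, IsPartition B ∧
      ∀ γ ∈ F, ∀ i j : Fin n,
        |(ν (a.toFun γ ⁻¹' A i ∩ A j)).toReal - (ν (b.toFun γ ⁻¹' B i ∩ B j)).toReal| < ε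

/-- The point `M^𝒜_{t,k}(c) ∈ [0,1]^{t × k × k}` whose `(s, l, m)` coordinate is
`ν(γₛᶜ A_l ∩ A_m)`, where `(γₛ)` is the fixed enumeration `e` of `Γ`. The ambient space
`[0,1]^{t × k × k}` carries the metric given by the sum of coordinate distances, i.e. the
`ℓ¹` (taxicab) metric, realized by `PiLp 1`. -/
def Mpoint {Γ Y : Type*} [Group Γ] [MeasurableSpace Y] (ν : Measure Y) (e : ℕ → Γ)
    (c : Γ → Y → Y) (t k : ℕ) (A : Fin k → Set Y) :
    PiLp 1 (fun _ : Fin t × Fin k × Fin k => ℝ) :=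
  WithLp.toLp 1 (fun p : Fin t × Fin k × Fin k => (ν (c (e p.1) ⁻¹' A p.2.1 ∩ A p.2.2)).toReal)

/-- `C_{t,k}(c)`: the closure in `[0,1]^{t × k × k}` (with the sum metric) of the set of
points `M^𝒜_{t,k}(c)` over all measurable partitions `𝒜` of the space into `k` pieces. -/
def Cset {Γ Y : Type*} [Group Γ] [MeasurableSpace Y] (ν : Measure Y) (e : ℕ → Γ)
    (c : Γ → Y → Y) (t k : ℕ) : Set (PiLp 1 (fun _ : Fin t × Fin k × Fin k => ℝ)) :=
  closure {x | ∃ A : Fin k → Set Y, IsPartition A ∧ x = Mpoint ν e c t k A}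

/-! ### Auxiliary lemmas -/

section Aux

lemma l1_dist_eq {ι : Type*} [Fintype ι] (x y : PiLp 1 (fun _ : ι => ℝ)) :
    dist x y = ∑ i, |x i - y i| := by
  rw [PiLp.dist_eq_sum (by norm_num : 0 < (1 : ENNReal).toReal)]
  simp [Real.dist_eq]

lemma abs_coord_le_dist {ι : Type*} [Fintype ι] (x y : PiLp 1 (fun _ : ι => ℝ)) (i : ι) :
    |x i - y i| ≤ dist x y := by
  rw [l1_dist_eq]
  exact Finset.single_le_sum (f := fun j => |x j - y j|) (fun j _ => abs_nonneg _)
    (Finset.mem_univ i)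

variable {Y : Type*} [MeasurableSpace Y] {ν : Measure Y}

lemma partition_sum [IsProbabilityMeasure ν] {k : ℕ} {A : Fin k → Set Y}
    (hA : IsPartition A) {f : Y → Y} (hf : Measurable f) :
    ∑ p : Fin k × Fin k, (ν (f ⁻¹' A p.1 ∩ A p.2)).toReal = 1 := by
  obtain ⟨hmeas, hdisj, hcov⟩ := hA
  have hU : (⋃ p : Fin k × Fin k, f ⁻¹' A p.1 ∩ A p.2) = Set.univ := by
    ext x
    simp only [Set.mem_iUnion, Set.mem_inter_iff, Set.mem_preimage, Set.mem_univ, iff_true]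
    have h1 : f x ∈ ⋃ i, A i := hcov ▸ Set.mem_univ _
    have h2 : x ∈ ⋃ i, A i := hcov ▸ Set.mem_univ _
    obtain ⟨l, hl⟩ := Set.mem_iUnion.1 h1
    obtain ⟨m, hm⟩ := Set.mem_iUnion.1 h2
    exact ⟨(l, m), hl, hm⟩
  have hmeas' : ∀ p : Fin k × Fin k, MeasurableSet (f ⁻¹' A p.1 ∩ A p.2) :=
    fun p => (hf (hmeas p.1)).inter (hmeas p.2)
  have hpair : Pairwise (Function.onFun Disjoint
      fun p : Fin k × Fin k => f ⁻¹' A p.1 ∩ A p.2) := by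
    intro p q hpq
    by_cases h1 : p.1 = q.1
    · have h2 : p.2 ≠ q.2 := fun h2 => hpq (Prod.ext h1 h2)
      exact Disjoint.mono inf_le_right inf_le_right (hdisj _ _ h2)
    · exact Disjoint.mono inf_le_left inf_le_left ((hdisj _ _ h1).preimage f)
  have hm := measure_iUnion (μ := ν) hpair hmeas'
  rw [hU, measure_univ, tsum_fintype] at hm
  rw [← ENNReal.toReal_sum (fun p _ => measure_ne_top ν _), ← hm]
  simp

variable {Γ : Type*} [Group Γ]

/-- Any two `Mpoint`s (for possibly different actions and partitions) are at `ℓ¹`-distance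
at most `2 * t`. -/
lemma mpoint_dist_le [IsProbabilityMeasure ν] (e : ℕ → Γ) (a b : MPAction Γ Y ν)
    (t k : ℕ) {A B : Fin k → Set Y} (hA : IsPartition A) (hB : IsPartition B) :
    dist (Mpoint ν e a.toFun t k A) (Mpoint ν e b.toFun t k B) ≤ 2 * t := by
  rw [l1_dist_eq]
  have hbound : ∀ p : Fin t × Fin k × Fin k,
      |Mpoint ν e a.toFun t k A p - Mpoint ν e b.toFun t k B p| ≤
        Mpoint ν e a.toFun t k A p + Mpoint ν e b.toFun t k B p := by
    intro p
    have h1 : (0:ℝ) ≤ Mpoint ν e a.toFun t k A p := ENNReal.toReal_nonneg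
    have h2 : (0:ℝ) ≤ Mpoint ν e b.toFun t k B p := ENNReal.toReal_nonneg
    exact abs_le.2 ⟨by linarith, by linarith⟩
  calc ∑ p, |Mpoint ν e a.toFun t k A p - Mpoint ν e b.toFun t k B p|
      ≤ ∑ p, (Mpoint ν e a.toFun t k A p + Mpoint ν e b.toFun t k B p) :=
        Finset.sum_le_sum fun p _ => hbound p
    _ = ∑ p, Mpoint ν e a.toFun t k A p + ∑ p, Mpoint ν e b.toFun t k B p :=
        Finset.sum_add_distrib
    _ = 2 * t := by
        have hs : ∀ (c : MPAction Γ Y ν) (C : Fin k → Set Y), IsPartition C →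
            ∑ p : Fin t × Fin k × Fin k, Mpoint ν e c.toFun t k C p = t := by
          intro c C hC
          rw [Fintype.sum_prod_type]
          have h1 : ∀ s : Fin t, ∑ q : Fin k × Fin k, Mpoint ν e c.toFun t k C (s, q) = 1 :=
            fun s => partition_sum hC (c.measurePreserving (e s)).measurable
          calc (∑ s : Fin t, ∑ q : Fin k × Fin k, Mpoint ν e c.toFun t k C (s, q))
              = ∑ _s : Fin t, (1:ℝ) := Finset.sum_congr rfl fun s _ => h1 s
            _ = t := by simp
        rw [hs a A hA, hs b B hB]; ring

lemma isPartition_triv (k : ℕ) :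
    IsPartition (fun i : Fin (k + 1) => if i = 0 then (Set.univ : Set Y) else ∅) := by
  refine ⟨fun i => ?_, fun i j hij => ?_, ?_⟩
  · by_cases h : i = 0 <;> simp [h]
  · by_cases hi : i = 0
    · have hj : j ≠ 0 := hi ▸ hij.symm
      simp [hi, hj]
    · simp [hi]
  · apply Set.eq_univ_of_univ_subset
    intro x _
    exact Set.mem_iUnion.2 ⟨0, by simp⟩

lemma isPartition_ne_zero {k : ℕ} {A : Fin k → Set Y} [Nonempty Y] (hA : IsPartition A) :
    k ≠ 0 := by
  rintro rfl
  have h := hA.2.2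
  rw [Set.iUnion_of_empty] at h
  exact Set.empty_ne_univ h

/-- The Hausdorff edistance between any two `Cset`s is at most `2 * t`. -/
lemma cset_hausdorffEdist_le [IsProbabilityMeasure ν] [Nonempty Y] (e : ℕ → Γ)
    (a b : MPAction Γ Y ν) (t k : ℕ) :
    Metric.hausdorffEDist (Cset ν e a.toFun t k) (Cset ν e b.toFun t k)
      ≤ ENNReal.ofReal (2 * t) := by
  have key : ∀ (c d : MPAction Γ Y ν),
      ∀ x ∈ {x | ∃ A : Fin k → Set Y, IsPartition A ∧ x = Mpoint ν e c.toFun t k A},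
      ∃ y ∈ {x | ∃ A : Fin k → Set Y, IsPartition A ∧ x = Mpoint ν e d.toFun t k A},
        edist x y ≤ ENNReal.ofReal (2 * t) := by
    rintro c d x ⟨A, hA, rfl⟩
    obtain ⟨k', rfl⟩ := Nat.exists_eq_succ_of_ne_zero (isPartition_ne_zero hA)
    refine ⟨Mpoint ν e d.toFun t (k' + 1) (fun i => if i = 0 then Set.univ else ∅),
      ⟨_, isPartition_triv k', rfl⟩, ?_⟩
    rw [edist_dist]
    exact ENNReal.ofReal_le_ofReal (mpoint_dist_le e c d t (k' + 1) hA (isPartition_triv k'))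
  have hle : Metric.hausdorffEDist
      {x | ∃ A : Fin k → Set Y, IsPartition A ∧ x = Mpoint ν e a.toFun t k A}
      {x | ∃ A : Fin k → Set Y, IsPartition A ∧ x = Mpoint ν e b.toFun t k A}
      ≤ ENNReal.ofReal (2 * t) :=
    Metric.hausdorffEDist_le_of_mem_edist (key a b) fun x hx => by
      obtain ⟨y, hy, hxy⟩ := key b a x hx
      exact ⟨y, hy, hxy⟩
  rw [Cset, Cset, Metric.hausdorffEDist_closure]
  exact hle

lemma cset_hausdorffEdist_ne_top [IsProbabilityMeasure ν] [Nonempty Y] (e : ℕ → Γ)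
    (a b : MPAction Γ Y ν) (t k : ℕ) :
    Metric.hausdorffEDist (Cset ν e a.toFun t k) (Cset ν e b.toFun t k) ≠ ⊤ :=
  ne_top_of_le_ne_top ENNReal.ofReal_ne_top (cset_hausdorffEdist_le e a b t k)

end Aux

section Main

variable {Γ : Type*} [Group Γ] {X : Type*} [MeasurableSpace X]
  {μ : Measure X} [IsProbabilityMeasure μ]

lemma subset_of_wc {a b : MPAction Γ X μ} (e : ℕ → Γ) (hab : WeaklyContained μ a b)
    (t k : ℕ) : Cset μ e a.toFun t k ⊆ Cset μ e b.toFun t k := by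
  classical
  refine closure_minimal ?_ isClosed_closure
  rintro x ⟨A, hA, rfl⟩
  rw [Cset, Metric.mem_closure_iff]
  intro ε hε
  have hden : (0:ℝ) < (t * k * k : ℕ) + 1 := by positivity
  set ε' : ℝ := ε / ((t * k * k : ℕ) + 1) with hε'def
  have hε' : 0 < ε' := by positivity
  obtain ⟨B, hB, hclose⟩ := hab k A hA ((Finset.range t).image e) ε' hε'
  refine ⟨Mpoint μ e b.toFun t k B, ⟨B, hB, rfl⟩, ?_⟩
  rw [l1_dist_eq]
  have hterm : ∀ p : Fin t × Fin k × Fin k,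
      |Mpoint μ e a.toFun t k A p - Mpoint μ e b.toFun t k B p| ≤ ε' := by
    intro p
    refine le_of_lt (hclose (e p.1) ?_ p.2.1 p.2.2)
    exact Finset.mem_image.2 ⟨(p.1 : ℕ), Finset.mem_range.2 p.1.isLt, rfl⟩
  calc (∑ p, |Mpoint μ e a.toFun t k A p - Mpoint μ e b.toFun t k B p|)
      ≤ (Finset.univ : Finset (Fin t × Fin k × Fin k)).card • ε' :=
        Finset.sum_le_card_nsmul _ _ _ fun p _ => hterm p
    _ = ((t * k * k : ℕ) : ℝ) * ε' := by
        simp [nsmul_eq_mul, Finset.card_univ, mul_assoc]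
    _ < ε := by
        rw [hε'def]
        rw [mul_div_assoc']
        rw [div_lt_iff₀ hden]
        nlinarith [hε.le, hden]
  
lemma wc_of_subset {a b : MPAction Γ X μ} (e : ℕ → Γ) (he : Function.Surjective e)
    (h : ∀ t k, Cset μ e a.toFun (t + 1) k ⊆ Cset μ e b.toFun (t + 1) k) :
    WeaklyContained μ a b := by
  intro n A hA F ε hε
  classical
  set g : Γ → ℕ := fun γ => (he γ).choose with hg
  set t := F.sup g with ht
  have hx : Mpoint μ e a.toFun (t + 1) n A ∈ Cset μ e a.toFun (t + 1) n :=
    subset_closure ⟨A, hA, rfl⟩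
  have hmem := h t n hx
  rw [Cset, Metric.mem_closure_iff] at hmem
  obtain ⟨y, ⟨B, hB, rfl⟩, hy⟩ := hmem ε hε
  refine ⟨B, hB, fun γ hγ i j => ?_⟩
  have hst : g γ < t + 1 := Nat.lt_succ_of_le (Finset.le_sup hγ)
  have heγ : e (g γ) = γ := (he γ).choose_spec
  have hcoord := abs_coord_le_dist (Mpoint μ e a.toFun (t + 1) n A)
    (Mpoint μ e b.toFun (t + 1) n B) (⟨g γ, hst⟩, i, j)
  simp only [Mpoint] at hcoord
  rw [heγ] at hcoord
  exact lt_of_le_of_lt hcoord hy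

end Main

/-- Define
`d_f(a,b) = ∑_{t=1}^∞ 2⁻ᵗ ⬝ sup_k d_H(C_{t,k}(a), C_{t,k}(b))`
(the sum below runs over `t : ℕ`, with `t + 1` playing the role of the index
`t = 1, 2, …`). Then `d_f(a, b) = 0` iff `a` and `b` are weakly equivalent. -/
theorem stmt_13 {Γ : Type*} [Group Γ] [Countable Γ]
    {X : Type*} [MeasurableSpace X] [StandardBorelSpace X]
    (μ : Measure X) [IsProbabilityMeasure μ]
    (e : ℕ → Γ) (he : Function.Surjective e)
    (a b : MPAction Γ X μ) :
    (∑' t : ℕ, (1 / 2 ^ (t + 1) : ℝ) *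
        ⨆ k : ℕ, hausdorffDist (Cset μ e a.toFun (t + 1) k) (Cset μ e b.toFun (t + 1) k))
      = 0
    ↔ (WeaklyContained μ a b ∧ WeaklyContained μ b a) := by
  have hX : Nonempty X := by
    by_contra hX
    rw [not_nonempty_iff] at hX
    have : μ Set.univ = 0 := by
      rw [Set.univ_eq_empty_iff.2 hX]; exact measure_empty
    rw [measure_univ] at this
    exact one_ne_zero this
  set dH : ℕ → ℕ → ℝ := fun t k =>
    hausdorffDist (Cset μ e a.toFun (t + 1) k) (Cset μ e b.toFun (t + 1) k) with hdH
  have hfin : ∀ t k, Metric.hausdorffEDist (Cset μ e a.toFun (t + 1) k)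
      (Cset μ e b.toFun (t + 1) k) ≠ ⊤ := fun t k =>
    cset_hausdorffEdist_ne_top e a b (t + 1) k
  have hdnn : ∀ t k, 0 ≤ dH t k := fun t k => hausdorffDist_nonneg
  have hdle : ∀ t k, dH t k ≤ 2 * (t + 1) := by
    intro t k
    have h1 := cset_hausdorffEdist_le e a b (t + 1) k
    have h2 : dH t k ≤ (ENNReal.ofReal (2 * ((t : ℝ) + 1))).toReal := by
      have := ENNReal.toReal_mono ENNReal.ofReal_ne_top h1
      simpa [dH, hausdorffDist, Nat.cast_add, Nat.cast_one] using this
    rwa [ENNReal.toReal_ofReal (by positivity)] at h2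
  set S : ℕ → ℝ := fun t => ⨆ k, dH t k with hS
  have hSnn : ∀ t, 0 ≤ S t := fun t => Real.iSup_nonneg (hdnn t)
  have hSle : ∀ t, S t ≤ 2 * (t + 1) := fun t => Real.iSup_le (hdle t) (by positivity)
  have hBdd : ∀ t, BddAbove (Set.range (dH t)) := fun t =>
    ⟨2 * (t + 1), by rintro x ⟨k, rfl⟩; exact hdle t k⟩
  set f : ℕ → ℝ := fun t => (1 / 2 ^ (t + 1) : ℝ) * S t with hf
  have hfnn : ∀ t, 0 ≤ f t := fun t => mul_nonneg (by positivity) (hSnn t)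
  have hsumm : Summable f := by
    refine Summable.of_nonneg_of_le (f := fun t : ℕ => ((t : ℝ) + 1) * (1 / 2) ^ t) hfnn ?_ ?_
    · intro t
      have : f t ≤ (1 / 2 ^ (t + 1) : ℝ) * (2 * (t + 1)) :=
        mul_le_mul_of_nonneg_left (hSle t) (by positivity)
      refine this.trans (le_of_eq ?_)
      rw [pow_succ]
      field_simp
      rw [← mul_pow]; norm_num
    · have h1 : Summable (fun t : ℕ => (t : ℝ) * (1 / 2) ^ t) := by
        have := summable_pow_mul_geometric_of_norm_lt_one (R := ℝ) 1
          (r := 1 / 2) (by norm_num)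
        simpa using this
      have h2 : Summable (fun t : ℕ => ((1 : ℝ) / 2) ^ t) :=
        summable_geometric_of_lt_one (by norm_num) (by norm_num)
      simpa [add_mul, one_mul] using h1.add h2
  constructor
  · intro h0
    have hft : ∀ t, f t = 0 := by
      intro t
      have hle : f t ≤ ∑' t, f t := Summable.le_tsum hsumm t fun j _ => hfnn j
      rw [h0] at hle
      exact le_antisymm hle (hfnn t)
    have hSt : ∀ t, S t = 0 := by
      intro t
      have := hft t
      rw [hf] at this
      rcases mul_eq_zero.1 this with h | h
      · exact absurd h (by positivity)
      · exact h
    have hdH0 : ∀ t k, dH t k = 0 := by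
      intro t k
      have h1 : dH t k ≤ S t := le_ciSup (hBdd t) k
      rw [hSt t] at h1
      exact le_antisymm h1 (hdnn t k)
    have heq : ∀ t k, Cset μ e a.toFun (t + 1) k = Cset μ e b.toFun (t + 1) k := by
      intro t k
      exact (IsClosed.hausdorffDist_zero_iff_eq isClosed_closure isClosed_closure
        (hfin t k)).1 (hdH0 t k)
    constructor
    · exact wc_of_subset e he fun t k => (heq t k).le
    · exact wc_of_subset e he fun t k => (heq t k).ge
  · rintro ⟨hab, hba⟩
    have heq : ∀ t k, Cset μ e a.toFun (t + 1) k = Cset μ e b.toFun (t + 1) k := fun t k =>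
      subset_antisymm (subset_of_wc e hab (t + 1) k) (subset_of_wc e hba (t + 1) k)
    have : ∀ t, f t = 0 := by
      intro t
      have hd0 : ∀ k, dH t k = 0 := fun k => by
        rw [hdH]; dsimp only; rw [heq t k]; exact hausdorffDist_self_zero
      have : S t = 0 := by
        rw [hS]; dsimp only
        rw [show dH t = fun _ => (0:ℝ) from funext hd0]
        exact ciSup_const
      rw [hf]; dsimp only; rw [this, mul_zero]
    calc ∑' t, f t = ∑' _ : ℕ, (0:ℝ) := by rw [funext this]
      _ = 0 := tsum_zero

end
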